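/- Let R be a reduced ring and a ∈ R. The principal ideal RaR is a right annihilator ideal (i.e., RaR = r(l(RaR))) if and only if RaR is a z°-ideal. -/

import Mathlib

open TwoSidedIdeal

/-- Left annihilator of a set: `l(S) = {x | ∀ s ∈ S, x*s = 0}`. -/
def lAnn (R : Type*) [Ring R] (S : Set R) : Set R := {x | ∀ s ∈ S, x * s = 0}

/-- Right annihilator of a set: `r(S) = {x | ∀ s ∈ S, s*x = 0}`. -/
def rAnn (R : Type*) [Ring R] (S : Set R) : Set R := {x | ∀ s ∈ S, s * x = 0}

/-- A ring is semiprime if `I² = 0` implies `I = 0` for every two-sided ideal `I`. -/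
def IsSemiprimeRing (R : Type*) [Ring R] : Prop :=
  ∀ I : TwoSidedIdeal R, (∀ a ∈ I, ∀ b ∈ I, a * b = 0) → I = ⊥

/-- A two-sided ideal `P` is prime if it is proper and `IJ ⊆ P` implies `I ⊆ P` or `J ⊆ P`. -/
def IsPrimeTSI {R : Type*} [Ring R] (P : TwoSidedIdeal R) : Prop :=
  P ≠ ⊤ ∧ ∀ I J : TwoSidedIdeal R, (∀ a ∈ I, ∀ b ∈ J, a * b ∈ P) → I ≤ P ∨ J ≤ P

/-- A minimal prime ideal: a prime two-sided ideal minimal among primes. -/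
def IsMinPrime {R : Type*} [Ring R] (P : TwoSidedIdeal R) : Prop :=
  IsPrimeTSI P ∧ ∀ Q : TwoSidedIdeal R, IsPrimeTSI Q → Q ≤ P → Q = P

/-- `Pmin R B` is the intersection of all minimal prime ideals of `R` containing the set `B`
(equal to all of `R` if there are none). -/
def Pmin (R : Type*) [Ring R] (B : Set R) : Set R :=
  ⋂ P ∈ {P : TwoSidedIdeal R | IsMinPrime P ∧ B ⊆ (P : Set R)}, (P : Set R)

/-- `Pa a` : the intersection of all minimal prime ideals containing `a`. -/
def Pa {R : Type*} [Ring R] (a : R) : Set R := Pmin R {a}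

/-- An ideal `I` is a z°-ideal if `P_a ⊆ I` for every `a ∈ I`. -/
def IsZoIdeal {R : Type*} [Ring R] (I : TwoSidedIdeal R) : Prop :=
  ∀ a ∈ I, Pa a ⊆ (I : Set R)

/-- An ideal `I` is a right d-ideal if `r(l(RaR)) ⊆ I` for every `a ∈ I`. -/
def IsRightDIdeal {R : Type*} [Ring R] (I : TwoSidedIdeal R) : Prop :=
  ∀ a ∈ I, rAnn R (lAnn R (span {a} : Set R)) ⊆ (I : Set R)

/-- An ideal `I` is a right annihilator ideal if `I = r(l(I))`. -/
def IsRightAnnIdeal {R : Type*} [Ring R] (I : TwoSidedIdeal R) : Prop :=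
  (I : Set R) = rAnn R (lAnn R (I : Set R))


section Reduced
variable {R : Type*} [Ring R] [IsReduced R]

lemma sq_zero {x : R} (h : x * x = 0) : x = 0 :=
  IsReduced.eq_zero x ⟨2, by rw [pow_two]; exact h⟩

lemma rot {x y : R} (h : x * y = 0) : y * x = 0 := by
  apply sq_zero
  calc y * x * (y * x) = y * (x * y) * x := by noncomm_ring
  _ = 0 := by rw [h]; noncomm_ring

lemma mid {x y : R} (h : x * y = 0) (r : R) : x * r * y = 0 := by
  have h2 : y * x = 0 := rot h
  apply sq_zero
  calc x * r * y * (x * r * y) = x * r * (y * x) * r * y := by noncomm_ring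
  _ = 0 := by rw [h2]; noncomm_ring

lemma sym3 {x y z : R} (h : x * y * z = 0) : y * x * z = 0 := by
  have h1 : y * (z * x) = 0 := by
    have h0 := rot (show x * (y * z) = 0 by rw [← mul_assoc]; exact h)
    calc y * (z * x) = y * z * x := by noncomm_ring
    _ = 0 := h0
  have h2 : y * x * (z * x) = 0 := mid h1 x
  have h3 : y * x * z * y * x = 0 := mid (show (y * x * z) * x = 0 by rw [mul_assoc]; exact h2) y
  apply sq_zero
  calc (y * x * z) * (y * x * z) = (y * x * z * y * x) * z := by noncomm_ring
  _ = 0 := by rw [h3]; noncomm_ring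

end Reduced

section SpanSingleton
variable {R : Type*} [Ring R]

/-- Explicit description of the principal two-sided ideal. -/
lemma mem_span_singleton {a x : R} :
    x ∈ (span {a} : TwoSidedIdeal R) ↔
      ∃ l : List (R × R), (l.map fun p => p.1 * a * p.2).sum = x := by
  constructor
  · intro hx
    let J : TwoSidedIdeal R := TwoSidedIdeal.mk'
      {x | ∃ l : List (R × R), (l.map fun p => p.1 * a * p.2).sum = x}
      ⟨[], rfl⟩
      (by rintro x y ⟨l1, rfl⟩ ⟨l2, rfl⟩
          exact ⟨l1 ++ l2, by simp⟩)
      (by rintro x ⟨l, rfl⟩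
          refine ⟨l.map fun p => (-p.1, p.2), ?_⟩
          induction l with
          | nil => simp
          | cons p t ih => simp_all [neg_add, neg_mul, add_comm])
      (by rintro x y ⟨l, rfl⟩
          refine ⟨l.map fun p => (x * p.1, p.2), ?_⟩
          induction l with
          | nil => simp
          | cons p t ih => simp_all [mul_add, mul_assoc])
      (by rintro x y ⟨l, rfl⟩
          refine ⟨l.map fun p => (p.1, p.2 * y), ?_⟩
          induction l with
          | nil => simp
          | cons p t ih => simp_all [add_mul, mul_assoc])
    have := mem_span_iff.mp hx J (by
      intro z hz
      rcases hz with rfl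
      show z ∈ J
      rw [TwoSidedIdeal.mem_mk']
      exact ⟨[(1, 1)], by simp⟩)
    rwa [TwoSidedIdeal.mem_mk'] at this
  · rintro ⟨l, rfl⟩
    induction l with
    | nil => simpa using (span {a} : TwoSidedIdeal R).zero_mem
    | cons p t ih =>
      simp only [List.map_cons, List.sum_cons]
      exact TwoSidedIdeal.add_mem _
        ((span {a}).mul_mem_right _ _
          ((span {a}).mul_mem_left _ _ (subset_span rfl))) ih

/-- If `y * a = 0` in a reduced ring then `y` annihilates all of `RaR`. -/
lemma lAnn_span_of [IsReduced R] {a y : R} (h : y * a = 0) :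
    y ∈ lAnn R (span {a} : Set R) := by
  intro s hs
  rw [SetLike.mem_coe, mem_span_singleton] at hs
  obtain ⟨l, rfl⟩ := hs
  induction l with
  | nil => simp
  | cons p t ih =>
    simp only [List.map_cons, List.sum_cons, mul_add, ih, add_zero]
    have h1 : y * p.1 * a = 0 := mid h p.1
    calc y * (p.1 * a * p.2) = (y * p.1 * a) * p.2 := by noncomm_ring
    _ = 0 := by rw [h1]; noncomm_ring

end SpanSingleton

section PrimeBasics
variable {R : Type*} [Ring R]

lemma mono_mul_span {P : TwoSidedIdeal R} {y : R} (c : R) (h : ∀ r : R, c * r * y ∈ P) :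
    ∀ v ∈ (span {y} : TwoSidedIdeal R), c * v ∈ P := by
  intro v hv
  rw [mem_span_singleton] at hv
  obtain ⟨l, rfl⟩ := hv
  induction l with
  | nil => simpa using P.zero_mem
  | cons q t ih =>
    simp only [List.map_cons, List.sum_cons, mul_add]
    refine P.add_mem ?_ ih
    have h1 : c * (q.1 * y * q.2) = (c * q.1 * y) * q.2 := by noncomm_ring
    rw [h1]
    exact P.mul_mem_right _ _ (h q.1)

/-- If `x R y ⊆ P` then `span{x} * span{y} ⊆ P`. -/
lemma span_mul_span_mem {P : TwoSidedIdeal R} {x y : R} (h : ∀ r : R, x * r * y ∈ P) :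
    ∀ u ∈ (span {x} : TwoSidedIdeal R), ∀ v ∈ (span {y} : TwoSidedIdeal R), u * v ∈ P := by
  intro u hu v hv
  rw [mem_span_singleton] at hu
  obtain ⟨l1, rfl⟩ := hu
  induction l1 with
  | nil => simpa using P.zero_mem
  | cons p t ih =>
    simp only [List.map_cons, List.sum_cons, add_mul]
    refine P.add_mem ?_ ih
    refine mono_mul_span _ (fun r => ?_) v hv
    have h1 : p.1 * x * p.2 * r * y = p.1 * (x * (p.2 * r) * y) := by noncomm_ring
    rw [h1]
    exact P.mul_mem_left _ _ (h _)

/-- Element-wise characterization of primality. -/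
lemma isPrimeTSI_iff {P : TwoSidedIdeal R} :
    IsPrimeTSI P ↔ P ≠ ⊤ ∧ ∀ x y : R, (∀ r : R, x * r * y ∈ P) → x ∈ P ∨ y ∈ P := by
  constructor
  · rintro ⟨hne, h⟩
    refine ⟨hne, fun x y hxy => ?_⟩
    rcases h (span {x}) (span {y}) (span_mul_span_mem hxy) with h' | h'
    · exact Or.inl (h' (subset_span rfl))
    · exact Or.inr (h' (subset_span rfl))
  · rintro ⟨hne, h⟩
    refine ⟨hne, fun I J hIJ => ?_⟩
    by_cases hI : I ≤ P
    · exact Or.inl hI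
    · refine Or.inr fun y hy => ?_
      rw [SetLike.not_le_iff_exists] at hI
      obtain ⟨x, hxI, hxP⟩ := hI
      rcases h x y (fun r => hIJ _ (I.mul_mem_right _ _ hxI) _ hy) with h' | h'
      · exact absurd h' hxP
      · exact h'

end PrimeBasics

section Lists
variable {R : Type*} [Ring R] [IsReduced R]

/-- In a reduced ring no product of elements outside a prime `P` is zero. -/
lemma prod_ne_zero {P : TwoSidedIdeal R} (hP : IsPrimeTSI P) :
    ∀ (t : List R) (c : R), c ∉ P → (∀ x ∈ t, x ∉ P) → c * t.prod ≠ 0 := by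
  intro t
  induction t with
  | nil =>
    intro c hc _ h0
    simp only [List.prod_nil, mul_one] at h0
    exact hc (h0 ▸ P.zero_mem)
  | cons b t ih =>
    intro c hc hmem h0
    simp only [List.prod_cons] at h0
    by_cases hrb : ∃ r : R, c * r * b ∉ P
    · obtain ⟨r, hr⟩ := hrb
      refine ih (c * r * b) hr (fun x hx => hmem x (List.mem_cons_of_mem _ hx)) ?_
      have h1 := mid h0 r
      calc c * r * b * t.prod = c * r * (b * t.prod) := by noncomm_ring
      _ = 0 := h1
    · push_neg at hrb
      rcases (isPrimeTSI_iff.mp hP).2 c b hrb with h | h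
      · exact hc h
      · exact hmem b List.mem_cons_self h

/-- Insertion lemma: inserting elements into a vanishing product keeps it vanishing. -/
lemma ins' : ∀ (l : List (R × R)) (c : R),
    c * (l.map Prod.fst).prod = 0 → c * (l.map fun p => p.1 * p.2).prod = 0 := by
  intro l
  induction l with
  | nil => intro c h; simpa using h
  | cons p t ih =>
    intro c h
    simp only [List.map_cons, List.prod_cons] at h ⊢
    have h1 : (c * p.1) * (t.map Prod.fst).prod = 0 := by
      calc (c * p.1) * (t.map Prod.fst).prod = c * (p.1 * (t.map Prod.fst).prod) := by noncomm_ring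
      _ = 0 := h
    have h2 : (c * p.1) * p.2 * (t.map Prod.fst).prod = 0 := mid h1 p.2
    have h3 := ih (c * p.1 * p.2) h2
    calc c * (p.1 * p.2 * (t.map fun p => p.1 * p.2).prod)
        = c * p.1 * p.2 * (t.map fun p => p.1 * p.2).prod := by noncomm_ring
    _ = 0 := h3

/-- Moving an element of a vanishing product to the front. -/
lemma swap_head [DecidableEq R] : ∀ (l : List R) (c x : R), x ∈ l → c * l.prod = 0 →
    x * c * (l.erase x).prod = 0 := by
  intro l
  induction l with
  | nil => intro c x hx; exact absurd hx List.not_mem_nil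
  | cons y t ih =>
    intro c x hx h
    by_cases hxy : y = x
    · subst hxy
      rw [List.erase_cons_head]
      refine sym3 ?_
      calc c * y * t.prod = c * (y * t.prod) := by noncomm_ring
      _ = 0 := by simpa using h
    · have hxt : x ∈ t := by
        rcases List.mem_cons.mp hx with h' | h'
        · exact absurd h'.symm hxy
        · exact h'
      rw [List.erase_cons_tail]
      · have h1 : (c * y) * t.prod = 0 := by
          calc (c * y) * t.prod = c * (y * t.prod) := by noncomm_ring
          _ = 0 := by simpa using h
        have h2 := ih (c * y) x hxt h1
        simp only [List.prod_cons]
        calc x * c * (y * (t.erase x).prod) = x * (c * y) * (t.erase x).prod := by noncomm_ring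
        _ = 0 := h2
      · simp [hxy]

/-- Extract all copies of `a` from a vanishing product to the front. -/
lemma extract [DecidableEq R] (X : Set R) (a : R) : ∀ (n : ℕ) (l : List R), l.length ≤ n →
    (∀ x ∈ l, x ∈ X ∨ x = a) → ∀ k : ℕ, a ^ k * l.prod = 0 →
    ∃ (k' : ℕ) (m : List R), (∀ x ∈ m, x ∈ X) ∧ a ^ k' * m.prod = 0 := by
  intro n
  induction n with
  | zero =>
    intro l hl hmem k h
    rw [Nat.le_zero, List.length_eq_zero_iff] at hl
    subst hl
    exact ⟨k, [], by simp, h⟩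
  | succ n ih =>
    intro l hl hmem k h
    by_cases ha : a ∈ l
    · have h1 := swap_head l (a ^ k) a ha h
      have h2 : a ^ (k + 1) * (l.erase a).prod = 0 := by
        calc a ^ (k + 1) * (l.erase a).prod = a * a ^ k * (l.erase a).prod := by
              rw [pow_succ']
        _ = 0 := h1
      refine ih (l.erase a) ?_ (fun x hx => hmem x (List.mem_of_mem_erase hx)) (k + 1) h2
      have := List.length_erase_of_mem ha
      omega
    · refine ⟨k, l, fun x hx => ?_, h⟩
      rcases hmem x hx with h' | h'
      · exact h'
      · exact absurd (h' ▸ hx) ha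

/-- From `a^(k+1) * s = 0` conclude `a * s = 0` in a reduced ring. -/
lemma pow_collapse {a s : R} : ∀ (k : ℕ), a ^ (k + 1) * s = 0 → a * s = 0 := by
  have key : ∀ (k : ℕ) (c : R), c * a ^ k * s = 0 → c * (a * s) ^ k * s = 0 := by
    intro k
    induction k with
    | zero => simpa using fun c h => h
    | succ k ihk =>
      intro c h
      have h1 : (c * a) * a ^ k * s = 0 := by
        calc (c * a) * a ^ k * s = c * a ^ (k + 1) * s := by rw [pow_succ']; noncomm_ring
        _ = 0 := h
      have h2 := ihk (c * a) h1
      have h3 : (c * a) * ((a * s) ^ k * s) = 0 := by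
        calc (c * a) * ((a * s) ^ k * s) = c * a * (a * s) ^ k * s := by noncomm_ring
        _ = 0 := h2
      have h4 := mid h3 s
      calc c * (a * s) ^ (k + 1) * s = (c * a) * s * ((a * s) ^ k * s) := by
            rw [pow_succ']; noncomm_ring
      _ = 0 := h4
  intro k h
  have h1 : (1 : R) * a ^ (k + 1) * s = 0 := by simpa using h
  have h2 := key (k + 1) 1 h1
  have h3 : (a * s) ^ (k + 1) * s = 0 := by simpa using h2
  have h4 : (a * s) ^ (k + 1) * a * s = 0 := by
    have := mid h3 a
    calc (a * s) ^ (k + 1) * a * s = (a * s) ^ (k + 1) * a * s := rfl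
    _ = 0 := this
  have h5 : (a * s) ^ (k + 2) = 0 := by
    calc (a * s) ^ (k + 2) = (a * s) ^ (k + 1) * a * s := by rw [pow_succ]; noncomm_ring
    _ = 0 := h4
  exact IsReduced.eq_zero _ ⟨k + 2, h5⟩

end Lists

section Zorn
variable {R : Type*} [Ring R]

/-- Union of a nonempty chain of two-sided ideals, as a two-sided ideal. -/
lemma chain_union_ideal (c : Set (TwoSidedIdeal R)) (hc : IsChain (· ≤ ·) c)
    (hne : c.Nonempty) : ∃ U : TwoSidedIdeal R, (U : Set R) = ⋃ I ∈ c, (I : Set R) := by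
  obtain ⟨I0, hI0⟩ := hne
  refine ⟨TwoSidedIdeal.mk' (⋃ I ∈ c, (I : Set R)) ?_ ?_ ?_ ?_ ?_, TwoSidedIdeal.coe_mk' _ _ _ _ _ _⟩
  · exact Set.mem_biUnion hI0 I0.zero_mem
  · rintro x y hx hy
    simp only [Set.mem_iUnion, SetLike.mem_coe] at hx hy ⊢
    obtain ⟨I, hI, hxI⟩ := hx
    obtain ⟨J, hJ, hyJ⟩ := hy
    rcases hc.total hI hJ with h | h
    · exact ⟨J, hJ, J.add_mem (h hxI) hyJ⟩
    · exact ⟨I, hI, I.add_mem hxI (h hyJ)⟩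
  · rintro x hx
    simp only [Set.mem_iUnion, SetLike.mem_coe] at hx ⊢
    obtain ⟨I, hI, hxI⟩ := hx
    exact ⟨I, hI, I.neg_mem hxI⟩
  · rintro x y hy
    simp only [Set.mem_iUnion, SetLike.mem_coe] at hy ⊢
    obtain ⟨I, hI, hyI⟩ := hy
    exact ⟨I, hI, I.mul_mem_left _ _ hyI⟩
  · rintro x y hx
    simp only [Set.mem_iUnion, SetLike.mem_coe] at hx ⊢
    obtain ⟨I, hI, hxI⟩ := hx
    exact ⟨I, hI, I.mul_mem_right _ _ hxI⟩

/-- Zorn: a prime ideal disjoint from a multiplicative set avoiding `0`. -/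
lemma exists_prime_disjoint (M : Submonoid R) (h0 : (0 : R) ∉ M) :
    ∃ Q : TwoSidedIdeal R, IsPrimeTSI Q ∧ ∀ m ∈ M, m ∉ Q := by
  set s : Set (TwoSidedIdeal R) := {I | ∀ m ∈ M, m ∉ I} with hs
  have hbot : (⊥ : TwoSidedIdeal R) ∈ s := by
    intro m hm hmI
    rw [TwoSidedIdeal.mem_bot] at hmI
    exact h0 (hmI ▸ hm)
  have ih : ∀ c ⊆ s, IsChain (· ≤ ·) c → ∀ y ∈ c, ∃ ub ∈ s, ∀ z ∈ c, z ≤ ub := by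
    intro c hcs hchain y hy
    obtain ⟨U, hU⟩ := chain_union_ideal c hchain ⟨y, hy⟩
    refine ⟨U, ?_, fun z hz => ?_⟩
    · intro m hm hmU
      have hm2 : m ∈ (U : Set R) := hmU
      rw [hU] at hm2
      simp only [Set.mem_iUnion, SetLike.mem_coe] at hm2
      obtain ⟨I, hIc, hmI⟩ := hm2
      exact hcs hIc m hm hmI
    · rw [TwoSidedIdeal.le_iff, hU]
      exact fun w hw => Set.mem_biUnion hz hw
  obtain ⟨Q, -, hQs, hQmax⟩ := zorn_le_nonempty₀ s ih ⊥ hbot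
  · refine ⟨Q, ?_, hQs⟩
    rw [isPrimeTSI_iff]
    constructor
    · intro htop
      exact hQs 1 M.one_mem (htop ▸ TwoSidedIdeal.mem_top R)
    · intro x y hxy
      by_contra hcon
      push_neg at hcon
      obtain ⟨hx, hy⟩ := hcon
      have hQx : (Q ⊔ span {x}) ∉ s := by
        intro hmem
        exact hx (hQmax hmem le_sup_left (TwoSidedIdeal.mem_sup_right (subset_span rfl)))
      have hQy : (Q ⊔ span {y}) ∉ s := by
        intro hmem
        exact hy (hQmax hmem le_sup_left (TwoSidedIdeal.mem_sup_right (subset_span rfl)))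
      simp only [hs, Set.mem_setOf_eq, not_forall, not_not] at hQx hQy
      obtain ⟨m1, hm1M, hm1⟩ := hQx
      obtain ⟨m2, hm2M, hm2⟩ := hQy
      rw [TwoSidedIdeal.mem_sup] at hm1 hm2
      obtain ⟨q1, hq1, u, hu, rfl⟩ := hm1
      obtain ⟨q2, hq2, v, hv, rfl⟩ := hm2
      refine hQs _ (M.mul_mem hm1M hm2M) ?_
      have : (q1 + u) * (q2 + v) = q1 * (q2 + v) + u * q2 + u * v := by noncomm_ring
      rw [this]
      exact Q.add_mem (Q.add_mem (Q.mul_mem_right _ _ hq1) (Q.mul_mem_left _ _ hq2))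
        (span_mul_span_mem hxy u hu v hv)

/-- Every prime contains a minimal prime. -/
lemma exists_minPrime_le (P : TwoSidedIdeal R) (hP : IsPrimeTSI P) :
    ∃ Q : TwoSidedIdeal R, IsMinPrime Q ∧ Q ≤ P := by
  set s : Set (TwoSidedIdeal R)ᵒᵈ :=
    {Q | IsPrimeTSI (OrderDual.ofDual Q) ∧ OrderDual.ofDual Q ≤ P} with hsdef
  have ih : ∀ c ⊆ s, IsChain (· ≤ ·) c → ∀ y ∈ c, ∃ ub ∈ s, ∀ z ∈ c, z ≤ ub := by
    intro c hcs hchain y hy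
    set T : Set (TwoSidedIdeal R) := OrderDual.ofDual '' c with hT
    have hyT : OrderDual.ofDual y ∈ T := ⟨y, hy, rfl⟩
    have hinf_le : ∀ I ∈ T, sInf T ≤ I := fun I hI => sInf_le hI
    refine ⟨OrderDual.toDual (sInf T), ⟨?_, ?_⟩, fun z hz => ?_⟩
    · rw [isPrimeTSI_iff]
      constructor
      · intro htop
        have h1 : (1 : R) ∈ sInf T := by
          have : sInf T = ⊤ := htop
          rw [this]; exact TwoSidedIdeal.mem_top R
        rw [TwoSidedIdeal.mem_sInf] at h1
        exact (hcs hy).1.1 (TwoSidedIdeal.eq_top _ (h1 _ hyT))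
      · intro x z hxz
        have hxz' : ∀ r : R, x * r * z ∈ sInf T := hxz
        by_cases hxQ : x ∈ sInf T
        · exact Or.inl hxQ
        · refine Or.inr ?_
          have hxQ' : ¬ ∀ I ∈ T, x ∈ I := by
            intro hall
            exact hxQ (by rw [TwoSidedIdeal.mem_sInf]; exact hall)
          push_neg at hxQ'
          obtain ⟨I0, hI0T, hxI0⟩ := hxQ'
          show z ∈ sInf T
          rw [TwoSidedIdeal.mem_sInf]
          intro I hIT
          obtain ⟨i, hic, rfl⟩ := hIT
          obtain ⟨i0, hi0c, hi0eq⟩ := hI0T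
          have hprimeI : IsPrimeTSI (OrderDual.ofDual i) := (hcs hic).1
          have hprimeI0 : IsPrimeTSI I0 := hi0eq ▸ (hcs hi0c).1
          rcases eq_or_ne i i0 with rfl | hne
          · rcases (isPrimeTSI_iff.mp hprimeI).2 x z
              (fun r => hinf_le _ ⟨i, hic, rfl⟩ (hxz' r)) with h | h
            · exact absurd (hi0eq ▸ h : x ∈ I0) hxI0
            · exact h
          · rcases hchain hic hi0c hne with hle | hle
            · -- in the dual order `i ≤ i0` means `I0 ≤ ofDual i`
              have hle' : I0 ≤ OrderDual.ofDual i := hi0eq ▸ hle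
              rcases (isPrimeTSI_iff.mp hprimeI0).2 x z
                (fun r => hi0eq ▸ hinf_le _ ⟨i0, hi0c, rfl⟩ (hxz' r)) with h | h
              · exact absurd h hxI0
              · exact hle' h
            · have hle' : OrderDual.ofDual i ≤ I0 := hi0eq ▸ hle
              have hxI : x ∉ OrderDual.ofDual i := fun hmem => hxI0 (hle' hmem)
              rcases (isPrimeTSI_iff.mp hprimeI).2 x z
                (fun r => hinf_le _ ⟨i, hic, rfl⟩ (hxz' r)) with h | h
              · exact absurd h hxI
              · exact h
    · exact le_trans (hinf_le _ hyT) (hcs hy).2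
    · exact hinf_le _ ⟨z, hz, rfl⟩
  obtain ⟨Q, hPQ, hQs, hQmax⟩ := zorn_le_nonempty₀ s ih (OrderDual.toDual P) ⟨hP, le_rfl⟩
  refine ⟨OrderDual.ofDual Q, ⟨hQs.1, fun Q' hQ' hQ'le => ?_⟩, hQs.2⟩
  have hmem : OrderDual.toDual Q' ∈ s := ⟨hQ', le_trans hQ'le hQs.2⟩
  exact le_antisymm hQ'le (hQmax hmem hQ'le)

end Zorn

section Main
variable {R : Type*} [Ring R] [IsReduced R]

lemma one_not_mem_of_prime {P : TwoSidedIdeal R} (hP : IsPrimeTSI P) : (1 : R) ∉ P := by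
  intro h
  exact hP.1 (TwoSidedIdeal.eq_top _ h)

/-- Minimal primes of reduced rings are completely prime: no product of elements
outside `P` lies in `P`. -/
lemma minPrime_compl_closure {P : TwoSidedIdeal R} (hP : IsMinPrime P) :
    ∀ m ∈ Submonoid.closure ((P : Set R)ᶜ), m ∉ P := by
  have h0 : (0 : R) ∉ Submonoid.closure ((P : Set R)ᶜ) := by
    intro h0
    obtain ⟨l, hl, hprod⟩ := Submonoid.exists_list_of_mem_closure h0
    refine prod_ne_zero hP.1 l 1 (one_not_mem_of_prime hP.1) (fun x hx => hl x hx) ?_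
    rw [one_mul, hprod]
  obtain ⟨Q, hQprime, hQdisj⟩ := exists_prime_disjoint _ h0
  have hQP : Q ≤ P := by
    intro x hx
    by_contra hxP
    exact hQdisj x (Submonoid.subset_closure hxP) hx
  have hQeq : Q = P := hP.2 Q hQprime hQP
  exact fun m hm => hQeq ▸ hQdisj m hm

/-- Key lemma: in a reduced ring, every element of a minimal prime is annihilated by
an element outside the prime. -/
lemma exists_annihilator {P : TwoSidedIdeal R} (hP : IsMinPrime P) {a : R} (ha : a ∈ P) :
    ∃ s : R, s ∉ P ∧ s * a = 0 := by
  classical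
  by_cases h0 : (0 : R) ∈ Submonoid.closure ((P : Set R)ᶜ ∪ {a})
  · obtain ⟨l, hl, hprod⟩ := Submonoid.exists_list_of_mem_closure h0
    obtain ⟨k', m, hmX, hm⟩ := extract ((P : Set R)ᶜ) a l.length l le_rfl
      (fun x hx => by
        rcases hl x hx with h | h
        · exact Or.inl h
        · exact Or.inr h) 0 (by simpa using hprod)
    have hs : m.prod ∈ Submonoid.closure ((P : Set R)ᶜ) :=
      Submonoid.list_prod_mem _ (fun x hx => Submonoid.subset_closure (hmX x hx))
    have hsP : m.prod ∉ P := minPrime_compl_closure hP _ hs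
    cases k' with
    | zero =>
      exfalso
      simp only [pow_zero, one_mul] at hm
      exact hsP (hm ▸ P.zero_mem)
    | succ k => exact ⟨m.prod, hsP, rot (pow_collapse k hm)⟩
  · exfalso
    obtain ⟨Q, hQprime, hQdisj⟩ := exists_prime_disjoint _ h0
    have hQP : Q ≤ P := by
      intro x hx
      by_contra hxP
      exact hQdisj x (Submonoid.subset_closure (Or.inl hxP)) hx
    have hQeq : Q = P := hP.2 Q hQprime hQP
    exact hQdisj a (Submonoid.subset_closure (Or.inr rfl)) (hQeq ▸ ha)

lemma mem_Pa_iff {a x : R} :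
    x ∈ Pa a ↔ ∀ P : TwoSidedIdeal R, IsMinPrime P → a ∈ P → x ∈ P := by
  simp only [Pa, Pmin, Set.mem_iInter, Set.mem_setOf_eq, SetLike.mem_coe,
    Set.singleton_subset_iff, and_imp]

/-- `r(l(RaR)) ⊆ P_a` in a reduced ring. -/
lemma rAnn_subset_Pa (a : R) :
    rAnn R (lAnn R ((span {a} : TwoSidedIdeal R) : Set R)) ⊆ Pa a := by
  intro x hx
  rw [mem_Pa_iff]
  intro P hP haP
  obtain ⟨s, hsP, hsa⟩ := exists_annihilator hP haP
  have hsl : s ∈ lAnn R ((span {a} : TwoSidedIdeal R) : Set R) := lAnn_span_of hsa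
  have hsx : s * x = 0 := hx s hsl
  rcases (isPrimeTSI_iff.mp hP.1).2 s x (fun r => (mid hsx r) ▸ P.zero_mem) with h | h
  · exact absurd h hsP
  · exact h

/-- `P_a ⊆ r(l(RaR))` in a reduced ring. -/
lemma Pa_subset_rAnn (b : R) :
    Pa b ⊆ rAnn R (lAnn R ((span {b} : TwoSidedIdeal R) : Set R)) := by
  intro x hx y hy
  by_contra hyx
  -- find a minimal prime avoiding `y * x`
  have hznil : (0 : R) ∉ Submonoid.powers (y * x) := by
    rintro ⟨n, hn⟩
    cases n with
    | zero =>
      simp only [pow_zero] at hn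
      have : (y * x : R) = 0 := by
        calc (y * x : R) = y * x * 1 := by rw [mul_one]
        _ = y * x * 0 := by rw [hn]
        _ = 0 := by rw [mul_zero]
      exact hyx this
    | succ n => exact hyx (IsReduced.eq_zero _ ⟨n + 1, hn⟩)
  obtain ⟨Q, hQprime, hQdisj⟩ := exists_prime_disjoint _ hznil
  obtain ⟨Q0, hQ0min, hQ0le⟩ := exists_minPrime_le Q hQprime
  have hyxQ0 : y * x ∉ Q0 := fun h => hQdisj _ ⟨1, pow_one _⟩ (hQ0le h)
  have hyQ0 : y ∉ Q0 := fun h => hyxQ0 (Q0.mul_mem_right _ _ h)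
  have hyb : ∀ r : R, y * r * b ∈ Q0 := by
    intro r
    have h1 : y * (r * b) = 0 := hy (r * b)
      (SetLike.mem_coe.mpr ((span {b}).mul_mem_left _ _ (subset_span rfl)))
    have h2 : y * r * b = 0 := by
      calc y * r * b = y * (r * b) := by noncomm_ring
      _ = 0 := h1
    exact h2 ▸ Q0.zero_mem
  have hbQ0 : b ∈ Q0 := by
    rcases (isPrimeTSI_iff.mp hQ0min.1).2 y b hyb with h | h
    · exact absurd h hyQ0
    · exact h
  have hxQ0 : x ∈ Q0 := mem_Pa_iff.mp hx Q0 hQ0min hbQ0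
  exact hyxQ0 (Q0.mul_mem_left _ _ hxQ0)

end Main


/-- Corollary 3.4(3): in a reduced ring, the principal ideal `RaR` is a right annihilator
ideal iff it is a z°-ideal. -/
theorem stmt3 (R : Type*) [Ring R] (hR : IsReduced R) (a : R) :
    IsRightAnnIdeal (span {a} : TwoSidedIdeal R) ↔ IsZoIdeal (span {a} : TwoSidedIdeal R) := by
  constructor
  · intro h b hb x hx
    have hsub : (span {b} : TwoSidedIdeal R) ≤ span {a} := by
      intro w hw
      exact mem_span_iff.mp hw (span {a}) (Set.singleton_subset_iff.mpr hb)
    have h1 : lAnn R ((span {a} : TwoSidedIdeal R) : Set R)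
        ⊆ lAnn R ((span {b} : TwoSidedIdeal R) : Set R) := by
      intro y hy s hs
      exact hy s (hsub hs)
    have h2 : rAnn R (lAnn R ((span {b} : TwoSidedIdeal R) : Set R))
        ⊆ rAnn R (lAnn R ((span {a} : TwoSidedIdeal R) : Set R)) := by
      intro z hz y hy
      exact hz y (h1 hy)
    have h3 : x ∈ rAnn R (lAnn R ((span {b} : TwoSidedIdeal R) : Set R)) :=
      Pa_subset_rAnn b hx
    have h4 := h2 h3
    rwa [← h] at h4
  · intro h
    apply Set.Subset.antisymm
    · intro x hx y hy
      exact hy x hx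
    · intro x hx
      exact h a (subset_span rfl) (rAnn_subset_Pa a hx)
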